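/- Let k ≥ 2 and let x = x_1…x_k and y = y_1…y_k be vertices of the hierarchical graph H_{n_1,…,n_k} with x_k ≠ y_k (no common suffix). If x_k = 0 or y_k = 0, then the graph distance satisfies dist(x,y) = alt(x) + alt(y). -/

import Mathlib

/-- The value of the `j`-th coordinate (0-indexed) of the string `x`,
extended by `0` for positions `≥ k`. -/
def extVal (n : ℕ → ℕ) (k : ℕ) (x : ∀ i : Fin k, Fin (n i)) (j : ℕ) : ℕ :=
  if h : j < k then (x ⟨j, h⟩).val else 0

/-- The alternating number of the string `x`: the number of (0-indexed) positions
`j ∈ {0,…,k-1}` such that exactly one of `x_j`, `x_{j+1}` is zero (with `x_k := 0`). -/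
def altNum (n : ℕ → ℕ) (k : ℕ) (x : ∀ i : Fin k, Fin (n i)) : ℕ :=
  ((Finset.range k).filter (fun j =>
    (extVal n k x j = 0 ∧ extVal n k x (j + 1) ≠ 0) ∨
    (extVal n k x j ≠ 0 ∧ extVal n k x (j + 1) = 0))).card

/-- Adjacency in the hierarchical graph `H_{n_1,…,n_k}` (coordinates 0-indexed):
rule (A1): the two strings differ exactly in the first coordinate;
rule (A2): for some `j`, one string has its first `j+1` coordinates all zero, the other
has its first `j+1` coordinates all nonzero, and they agree on the remaining coordinates;
rule (A3): for some `m ≥ 1`, both strings have their first `m` coordinates zero, their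
`m`-th coordinates are distinct and nonzero, and they agree beyond position `m`. -/
def HierAdj (n : ℕ → ℕ) (k : ℕ) (x y : ∀ i : Fin k, Fin (n i)) : Prop :=
  x ≠ y ∧
    ((∀ i : Fin k, 0 < i.val → x i = y i) ∨
     (∃ j : Fin k,
       (((∀ i : Fin k, i.val ≤ j.val → (x i).val = 0) ∧
         (∀ i : Fin k, i.val ≤ j.val → (y i).val ≠ 0)) ∨
        ((∀ i : Fin k, i.val ≤ j.val → (y i).val = 0) ∧
         (∀ i : Fin k, i.val ≤ j.val → (x i).val ≠ 0))) ∧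
       (∀ i : Fin k, j.val < i.val → x i = y i)) ∨
     (∃ m : Fin k, 0 < m.val ∧
       (∀ i : Fin k, i.val < m.val → (x i).val = 0 ∧ (y i).val = 0) ∧
       (x m).val ≠ 0 ∧ (y m).val ≠ 0 ∧ x m ≠ y m ∧
       (∀ i : Fin k, m.val < i.val → x i = y i)))

/-- The hierarchical graph `H_{n_1,…,n_k}` as a simple graph on the strings
`x = x_1…x_k` with `x_i ∈ Z_{n_i}`. -/
def hierGraph (n : ℕ → ℕ) (k : ℕ) : SimpleGraph (∀ i : Fin k, Fin (n i)) where
  Adj := HierAdj n k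
  symm := by
    constructor
    rintro x y ⟨hne, h⟩
    refine ⟨hne.symm, ?_⟩
    rcases h with h | ⟨j, hj, hag⟩ | ⟨m, hm, hpre, hx, hy, hxy, hs⟩
    · exact Or.inl fun i hi => (h i hi).symm
    · exact Or.inr (Or.inl ⟨j, hj.symm, fun i hi => (hag i hi).symm⟩)
    · exact Or.inr (Or.inr ⟨m, hm, fun i hi => ⟨(hpre i hi).2, (hpre i hi).1⟩,
        hy, hx, hxy.symm, fun i hi => (hs i hi).symm⟩)
  loopless := ⟨fun x h => h.1 rfl⟩

section Stmt5Aux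

open Finset

lemma filter_card_le' {α : Type*} [DecidableEq α] (s : Finset α) (p q : α → Prop)
    [DecidablePred p] [DecidablePred q] (t : α)
    (h : ∀ w ∈ s, w ≠ t → (p w ↔ q w)) :
    (s.filter p).card ≤ (s.filter q).card + 1 := by
  have hsub : s.filter p ⊆ insert t (s.filter q) := by
    intro w hw
    simp only [mem_filter, mem_insert] at hw ⊢
    by_cases hwt : w = t
    · exact Or.inl hwt
    · exact Or.inr ⟨hw.1, (h w hw.1 hwt).mp hw.2⟩
  exact (card_le_card hsub).trans (card_insert_le _ _)

lemma filter_card_succ' {α : Type*} [DecidableEq α] (s : Finset α) (p q : α → Prop)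
    [DecidablePred p] [DecidablePred q] (t : α) (ht : t ∈ s) (hp : p t) (hq : ¬ q t)
    (h : ∀ w ∈ s, w ≠ t → (p w ↔ q w)) :
    (s.filter p).card = (s.filter q).card + 1 := by
  have hset : s.filter p = insert t (s.filter q) := by
    ext w
    simp only [mem_filter, mem_insert]
    constructor
    · rintro ⟨hws, hpw⟩
      by_cases hwt : w = t
      · exact Or.inl hwt
      · exact Or.inr ⟨hws, (h w hws hwt).mp hpw⟩
    · rintro (rfl | ⟨hws, hqw⟩)
      · exact ⟨ht, hp⟩
      · by_cases hwt : w = t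
        · exact absurd hqw (hwt ▸ hq)
        · exact ⟨hws, (h w hws hwt).mpr hqw⟩
  rw [hset, card_insert_of_notMem (by simp [hq])]

variable {n : ℕ → ℕ} {k : ℕ}

/-- The predicate counted by `altNum`. -/
abbrev Pr (n : ℕ → ℕ) (k : ℕ) (x : ∀ i : Fin k, Fin (n i)) (j : ℕ) : Prop :=
  (extVal n k x j = 0 ∧ extVal n k x (j + 1) ≠ 0) ∨
  (extVal n k x j ≠ 0 ∧ extVal n k x (j + 1) = 0)

lemma altNum_eq (x : ∀ i : Fin k, Fin (n i)) :
    altNum n k x = ((Finset.range k).filter (Pr n k x)).card := rfl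

lemma extVal_lt (x : ∀ i : Fin k, Fin (n i)) {j : ℕ} (h : j < k) :
    extVal n k x j = (x ⟨j, h⟩).val := dif_pos h

lemma extVal_ge (x : ∀ i : Fin k, Fin (n i)) {j : ℕ} (h : k ≤ j) :
    extVal n k x j = 0 := dif_neg (by omega)

lemma pr_iff_of (x y : ∀ i : Fin k, Fin (n i)) (w : ℕ)
    (h0 : extVal n k x w = 0 ↔ extVal n k y w = 0)
    (h1 : extVal n k x (w + 1) = 0 ↔ extVal n k y (w + 1) = 0) :
    Pr n k x w ↔ Pr n k y w := by
  unfold Pr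
  tauto

lemma altNum_le_alt (x y : ∀ i : Fin k, Fin (n i)) (t : ℕ)
    (h : ∀ w < k, w ≠ t → (Pr n k x w ↔ Pr n k y w)) :
    altNum n k x ≤ altNum n k y + 1 := by
  rw [altNum_eq, altNum_eq]
  exact filter_card_le' _ _ _ t (fun w hw hwt => h w (mem_range.mp hw) hwt)

lemma altNum_sub_one (x y : ∀ i : Fin k, Fin (n i)) (t : ℕ) (ht : t < k)
    (hx : Pr n k x t) (hy : ¬ Pr n k y t)
    (h : ∀ w < k, w ≠ t → (Pr n k x w ↔ Pr n k y w)) :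
    altNum n k x = altNum n k y + 1 := by
  rw [altNum_eq, altNum_eq]
  exact filter_card_succ' _ _ _ t (mem_range.mpr ht) hx hy
    (fun w hw hwt => h w (mem_range.mp hw) hwt)

lemma altNum_congr (x y : ∀ i : Fin k, Fin (n i))
    (h : ∀ j, extVal n k x j = 0 ↔ extVal n k y j = 0) :
    altNum n k x = altNum n k y := by
  rw [altNum_eq, altNum_eq]
  congr 1
  apply Finset.filter_congr
  intro w _
  exact pr_iff_of x y w (h w) (h (w + 1))

lemma altNum_zero_of (x : ∀ i : Fin k, Fin (n i)) (h : ∀ j, extVal n k x j = 0) :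
    altNum n k x = 0 := by
  rw [altNum_eq, Finset.card_eq_zero, Finset.filter_eq_empty_iff]
  intro w _
  unfold Pr
  simp [h w, h (w + 1)]

lemma altNum_le_one_of (x : ∀ i : Fin k, Fin (n i)) (h : ∀ j < k, extVal n k x j ≠ 0) :
    altNum n k x ≤ 1 := by
  rw [altNum_eq]
  have hsub : (Finset.range k).filter (Pr n k x) ⊆ {k - 1} := by
    intro w hw
    simp only [mem_filter, mem_range, mem_singleton] at hw ⊢
    by_contra hwk
    have hw1 : w + 1 < k := by omega
    rcases hw.2 with ⟨h0, _⟩ | ⟨_, h0⟩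
    · exact h w hw.1 h0
    · exact h (w + 1) hw1 h0
  exact (card_le_card hsub).trans (by simp)

lemma altNum_pos_of (x : ∀ i : Fin k, Fin (n i)) (j : ℕ) (hj : extVal n k x j ≠ 0) :
    0 < altNum n k x := by
  have hjk : j < k := by
    by_contra h
    exact hj (extVal_ge x (by omega))
  set S := (Finset.range k).filter (fun w => extVal n k x w ≠ 0) with hS
  have hSne : S.Nonempty := ⟨j, by simp [hS, hjk, hj]⟩
  set t := S.max' hSne with htdef
  have htS : t ∈ S := S.max'_mem hSne
  have htk : t < k := by
    have := mem_filter.mp htS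
    exact mem_range.mp this.1
  have htnz : extVal n k x t ≠ 0 := (mem_filter.mp htS).2
  have ht1 : extVal n k x (t + 1) = 0 := by
    by_cases h1 : t + 1 < k
    · by_contra hc
      have : t + 1 ∈ S := mem_filter.mpr ⟨mem_range.mpr h1, hc⟩
      have := S.le_max' _ this
      omega
    · exact extVal_ge x (by omega)
  rw [altNum_eq, card_pos]
  exact ⟨t, mem_filter.mpr ⟨mem_range.mpr htk, Or.inr ⟨htnz, ht1⟩⟩⟩

/-- The all-zero vertex. -/
def zV (hn : ∀ i < k, 2 ≤ n i) : ∀ i : Fin k, Fin (n i) :=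
  fun i => ⟨0, by have := hn i.val i.isLt; omega⟩

lemma extVal_zV (hn : ∀ i < k, 2 ≤ n i) (j : ℕ) : extVal n k (zV hn) j = 0 := by
  by_cases h : j < k
  · rw [extVal_lt _ h]; rfl
  · exact extVal_ge _ (by omega)

lemma eq_zV (hn : ∀ i < k, 2 ≤ n i) (x : ∀ i : Fin k, Fin (n i))
    (h : ∀ j < k, extVal n k x j = 0) : x = zV hn := by
  funext i
  apply Fin.ext
  have := h i.val i.isLt
  rwa [extVal_lt x i.isLt] at this
/-- Step helper A: zero out a leading nonzero block. -/
lemma stepA (hn : ∀ i < k, 2 ≤ n i) (x : ∀ i : Fin k, Fin (n i)) (jj : ℕ) (hjj : jj < k)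
    (hnzx : ∀ i ≤ jj, extVal n k x i ≠ 0)
    (hz1 : extVal n k x (jj + 1) = 0) :
    ∃ x', (hierGraph n k).Adj x x' ∧ altNum n k x = altNum n k x' + 1 := by
  set x' : ∀ i : Fin k, Fin (n i) :=
    fun i => if i.val ≤ jj then ⟨0, by have := hn i.val i.isLt; omega⟩ else x i with hx'
  have hx'z : ∀ i : Fin k, i.val ≤ jj → (x' i).val = 0 := by
    intro i hi; simp only [hx']; rw [if_pos hi]
  have hx'a : ∀ i : Fin k, jj < i.val → x' i = x i := by
    intro i hi; simp only [hx']; rw [if_neg (by omega)]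
  have hxz : ∀ i : Fin k, i.val ≤ jj → (x i).val ≠ 0 := by
    intro i hi
    have h2 := hnzx i.val hi
    rwa [extVal_lt x i.isLt] at h2
  have hex'z : ∀ i ≤ jj, extVal n k x' i = 0 := by
    intro i hi
    rw [extVal_lt x' (by omega)]
    exact hx'z ⟨i, by omega⟩ hi
  have hex'a : ∀ i, jj < i → extVal n k x' i = extVal n k x i := by
    intro i hi
    by_cases h : i < k
    · rw [extVal_lt x' h, extVal_lt x h, hx'a ⟨i, h⟩ hi]
    · rw [extVal_ge x' (by omega), extVal_ge x (by omega)]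
  have hne : x ≠ x' := by
    intro h
    have h0 := hxz ⟨0, by omega⟩ (Nat.zero_le _)
    have h1 := hx'z ⟨0, by omega⟩ (Nat.zero_le _)
    rw [h] at h0
    exact h0 h1
  refine ⟨x', ⟨hne, Or.inr (Or.inl ⟨⟨jj, hjj⟩, Or.inr ⟨fun i hi => hx'z i hi,
    fun i hi => hxz i hi⟩, fun i hi => (hx'a i hi).symm⟩)⟩, ?_⟩
  apply altNum_sub_one x x' jj hjj
  · exact Or.inr ⟨hnzx jj le_rfl, hz1⟩
  · intro hc
    have e1 : extVal n k x' (jj + 1) = 0 := by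
      rw [hex'a (jj + 1) (by omega)]; exact hz1
    rcases hc with ⟨_, h⟩ | ⟨h, _⟩
    · exact h e1
    · exact h (hex'z jj le_rfl)
  · intro w hw hwj
    rcases Nat.lt_or_ge w jj with hlt | hge
    · constructor
      · intro hc
        rcases hc with ⟨h0, _⟩ | ⟨_, h0⟩
        · exact absurd h0 (hnzx w (by omega))
        · exact absurd h0 (hnzx (w + 1) (by omega))
      · intro hc
        rcases hc with ⟨_, h0⟩ | ⟨h0, _⟩
        · exact absurd (hex'z (w + 1) (by omega)) h0
        · exact absurd (hex'z w (by omega)) h0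
    · have hgt : jj < w := by omega
      exact pr_iff_of x x' w (by rw [hex'a w hgt]) (by rw [hex'a (w + 1) (by omega)])

/-- Step helper B: fill a leading zero block with ones. -/
lemma stepB (hn : ∀ i < k, 2 ≤ n i) (x : ∀ i : Fin k, Fin (n i)) (jj : ℕ) (hjj : jj < k)
    (hzx : ∀ i ≤ jj, extVal n k x i = 0)
    (hnz1 : extVal n k x (jj + 1) ≠ 0) :
    ∃ x', (hierGraph n k).Adj x x' ∧ altNum n k x = altNum n k x' + 1 := by
  set x' : ∀ i : Fin k, Fin (n i) :=
    fun i => if i.val ≤ jj then ⟨1, by have := hn i.val i.isLt; omega⟩ else x i with hx'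
  have hx'nz : ∀ i : Fin k, i.val ≤ jj → (x' i).val = 1 := by
    intro i hi; simp only [hx']; rw [if_pos hi]
  have hx'a : ∀ i : Fin k, jj < i.val → x' i = x i := by
    intro i hi; simp only [hx']; rw [if_neg (by omega)]
  have hxz : ∀ i : Fin k, i.val ≤ jj → (x i).val = 0 := by
    intro i hi
    have h2 := hzx i.val hi
    rwa [extVal_lt x i.isLt] at h2
  have hex'nz : ∀ i ≤ jj, extVal n k x' i ≠ 0 := by
    intro i hi
    rw [extVal_lt x' (by omega)]
    rw [hx'nz ⟨i, by omega⟩ hi]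
    omega
  have hex'a : ∀ i, jj < i → extVal n k x' i = extVal n k x i := by
    intro i hi
    by_cases h : i < k
    · rw [extVal_lt x' h, extVal_lt x h, hx'a ⟨i, h⟩ hi]
    · rw [extVal_ge x' (by omega), extVal_ge x (by omega)]
  have hne : x ≠ x' := by
    intro h
    have h0 := hxz ⟨0, by omega⟩ (Nat.zero_le _)
    have h1 := hx'nz ⟨0, by omega⟩ (Nat.zero_le _)
    rw [h, h1] at h0
    omega
  refine ⟨x', ⟨hne, Or.inr (Or.inl ⟨⟨jj, hjj⟩, Or.inl ⟨fun i hi => hxz i hi,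
    fun i hi => by rw [hx'nz i hi]; omega⟩, fun i hi => (hx'a i hi).symm⟩)⟩, ?_⟩
  apply altNum_sub_one x x' jj hjj
  · exact Or.inl ⟨hzx jj le_rfl, hnz1⟩
  · intro hc
    have e1 : extVal n k x' (jj + 1) ≠ 0 := by
      rw [hex'a (jj + 1) (by omega)]; exact hnz1
    rcases hc with ⟨h, _⟩ | ⟨_, h⟩
    · exact hex'nz jj le_rfl h
    · exact e1 h
  · intro w hw hwj
    rcases Nat.lt_or_ge w jj with hlt | hge
    · constructor
      · intro hc
        rcases hc with ⟨_, h0⟩ | ⟨h0, _⟩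
        · exact absurd (hzx (w + 1) (by omega)) h0
        · exact absurd (hzx w (by omega)) h0
      · intro hc
        rcases hc with ⟨h0, _⟩ | ⟨_, h0⟩
        · exact absurd h0 (hex'nz w (by omega))
        · exact absurd h0 (hex'nz (w + 1) (by omega))
    · have hgt : jj < w := by omega
      exact pr_iff_of x x' w (by rw [hex'a w hgt]) (by rw [hex'a (w + 1) (by omega)])

lemma step (hn : ∀ i < k, 2 ≤ n i) (x : ∀ i : Fin k, Fin (n i)) (hx : x ≠ zV hn) :
    ∃ x', (hierGraph n k).Adj x x' ∧ altNum n k x = altNum n k x' + 1 := by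
  have hex : ∃ j, j < k ∧ extVal n k x j ≠ 0 := by
    by_contra h
    push_neg at h
    exact hx (eq_zV hn x h)
  obtain ⟨j0, hj0k, hj0⟩ := hex
  by_cases h0 : extVal n k x 0 = 0
  · -- leading zero block : stepB
    set T := (Finset.range k).filter (fun w => extVal n k x w ≠ 0) with hT
    have hTne : T.Nonempty := ⟨j0, by simp [hT, Finset.mem_filter, Finset.mem_range, hj0k, hj0]⟩
    set t := T.min' hTne with htdef
    have htT : t ∈ T := T.min'_mem hTne
    have htk : t < k := Finset.mem_range.mp (Finset.mem_filter.mp htT).1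
    have htnz : extVal n k x t ≠ 0 := (Finset.mem_filter.mp htT).2
    have htpos : 0 < t := by
      rcases Nat.eq_zero_or_pos t with h | h
      · rw [h] at htnz; exact absurd h0 htnz
      · exact h
    have hbelow : ∀ i < t, extVal n k x i = 0 := by
      intro i hi
      by_contra hc
      have hmem : i ∈ T := Finset.mem_filter.mpr ⟨Finset.mem_range.mpr (by omega), hc⟩
      have := T.min'_le _ hmem
      omega
    have heq : t - 1 + 1 = t := by omega
    exact stepB hn x (t - 1) (by omega) (fun i hi => hbelow i (by omega))
      (by rw [heq]; exact htnz)
  · -- leading nonzero block : stepA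
    by_cases hS : ∃ i, i < k ∧ extVal n k x i = 0
    · obtain ⟨i0, hi0k, hi0⟩ := hS
      set S := (Finset.range k).filter (fun w => extVal n k x w = 0) with hSdef
      have hSne : S.Nonempty := ⟨i0, by simp [hSdef, Finset.mem_filter, Finset.mem_range, hi0k, hi0]⟩
      set t := S.min' hSne with htdef
      have htS : t ∈ S := S.min'_mem hSne
      have htk : t < k := Finset.mem_range.mp (Finset.mem_filter.mp htS).1
      have htz : extVal n k x t = 0 := (Finset.mem_filter.mp htS).2
      have htpos : 0 < t := by
        rcases Nat.eq_zero_or_pos t with h | h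
        · rw [h] at htz; exact absurd htz h0
        · exact h
      have hbelow : ∀ i < t, extVal n k x i ≠ 0 := by
        intro i hi
        intro hc
        have hmem : i ∈ S := Finset.mem_filter.mpr ⟨Finset.mem_range.mpr (by omega), hc⟩
        have := S.min'_le _ hmem
        omega
      have heq : t - 1 + 1 = t := by omega
      exact stepA hn x (t - 1) (by omega) (fun i hi => hbelow i (by omega))
        (by rw [heq]; exact htz)
    · push_neg at hS
      have hk1 : 1 ≤ k := by omega
      exact stepA hn x (k - 1) (by omega) (fun i hi => hS i (by omega))
        (extVal_ge x (by omega))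

lemma walk_to_zero (hn : ∀ i < k, 2 ≤ n i) (x : ∀ i : Fin k, Fin (n i)) :
    ∃ p : (hierGraph n k).Walk x (zV hn), p.length ≤ altNum n k x := by
  generalize hm : altNum n k x = m
  induction m generalizing x with
  | zero =>
    have hxz : x = zV hn := by
      apply eq_zV hn x
      intro j hj
      by_contra h
      have := altNum_pos_of x j h
      omega
    subst hxz
    exact ⟨SimpleGraph.Walk.nil, by simp⟩
  | succ m ih =>
    by_cases hxz : x = zV hn
    · subst hxz
      exact ⟨SimpleGraph.Walk.nil, by simp⟩
    · obtain ⟨x', hadj, halt⟩ := step hn x hxz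
      obtain ⟨p, hp⟩ := ih x' (by omega)
      exact ⟨SimpleGraph.Walk.cons hadj p, by simp [SimpleGraph.Walk.length_cons]; omega⟩
/-- The signed alternating number: a 1-Lipschitz potential on the hierarchical graph. -/
def fval (n : ℕ → ℕ) (k : ℕ) (x : ∀ i : Fin k, Fin (n i)) : ℤ :=
  if extVal n k x (k - 1) = 0 then -(altNum n k x : ℤ) else (altNum n k x : ℤ)

lemma fval_lip_A2 (hk : 2 ≤ k) (x y : ∀ i : Fin k, Fin (n i)) (j : Fin k)
    (hxz : ∀ i : Fin k, i.val ≤ j.val → (x i).val = 0)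
    (hynz : ∀ i : Fin k, i.val ≤ j.val → (y i).val ≠ 0)
    (hag : ∀ i : Fin k, j.val < i.val → x i = y i) :
    |fval n k x - fval n k y| ≤ 1 := by
  have hxe : ∀ i ≤ j.val, extVal n k x i = 0 := by
    intro i hi
    rw [extVal_lt x (lt_of_le_of_lt hi j.isLt)]
    exact hxz ⟨i, lt_of_le_of_lt hi j.isLt⟩ hi
  have hye : ∀ i ≤ j.val, extVal n k y i ≠ 0 := by
    intro i hi
    rw [extVal_lt y (lt_of_le_of_lt hi j.isLt)]
    exact hynz ⟨i, lt_of_le_of_lt hi j.isLt⟩ hi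
  have hae : ∀ i, j.val < i → extVal n k x i = extVal n k y i := by
    intro i hi
    by_cases h : i < k
    · rw [extVal_lt x h, extVal_lt y h, hag ⟨i, h⟩ hi]
    · rw [extVal_ge x (by omega), extVal_ge y (by omega)]
  by_cases hjk : j.val = k - 1
  · -- x is the all-zero string, y is all nonzero
    have hjisLt := j.isLt
    have hx0 : ∀ i, extVal n k x i = 0 := by
      intro i
      by_cases h : i < k
      · exact hxe i (by omega)
      · exact extVal_ge x (by omega)
    have haltx : altNum n k x = 0 := altNum_zero_of x hx0
    have halty : altNum n k y ≤ 1 := altNum_le_one_of y (fun i hi => hye i (by omega))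
    have hfx : fval n k x = 0 := by
      unfold fval
      rw [if_pos (hx0 _), haltx]
      simp
    have hfy : fval n k y = (altNum n k y : ℤ) := by
      unfold fval
      rw [if_neg (hye (k - 1) (by omega))]
    rw [hfx, hfy]
    have h1 : (0 : ℤ) ≤ (altNum n k y : ℤ) := by positivity
    have h2 : (altNum n k y : ℤ) ≤ 1 := by exact_mod_cast halty
    rw [abs_le]
    constructor <;> omega
  · have hjisLt := j.isLt
    have hj1 : j.val < k - 1 := by omega
    have hsign : extVal n k x (k - 1) = extVal n k y (k - 1) := hae (k - 1) (by omega)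
    have key : ∀ w < k, w ≠ j.val → (Pr n k x w ↔ Pr n k y w) := by
      intro w hw hwj
      rcases lt_or_gt_of_ne hwj with hlt | hgt
      · constructor
        · intro hc
          rcases hc with ⟨_, h0⟩ | ⟨h0, _⟩
          · exact absurd (hxe (w + 1) (by omega)) h0
          · exact absurd (hxe w (by omega)) h0
        · intro hc
          rcases hc with ⟨h0, _⟩ | ⟨_, h0⟩
          · exact absurd h0 (hye w (by omega))
          · exact absurd h0 (hye (w + 1) (by omega))
      · exact pr_iff_of x y w (by rw [hae w hgt]) (by rw [hae (w + 1) (by omega)])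
    have h1 := altNum_le_alt x y j.val key
    have h2 := altNum_le_alt y x j.val (fun w hw hwj => (key w hw hwj).symm)
    unfold fval
    rw [hsign]
    split_ifs <;> (rw [abs_le]; constructor <;> push_cast <;> omega)

lemma fval_lip (hk : 2 ≤ k) {x y : ∀ i : Fin k, Fin (n i)}
    (h : (hierGraph n k).Adj x y) :
    |fval n k x - fval n k y| ≤ 1 := by
  obtain ⟨hne, h1 | ⟨j, hj, hag⟩ | ⟨m, hm, hpre, hmx, hmy, hmne, hs⟩⟩ := h
  · -- A1
    have hae : ∀ i, 1 ≤ i → extVal n k x i = extVal n k y i := by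
      intro i hi
      by_cases h : i < k
      · rw [extVal_lt x h, extVal_lt y h, h1 ⟨i, h⟩ hi]
      · rw [extVal_ge x (by omega), extVal_ge y (by omega)]
    have hsign : extVal n k x (k - 1) = extVal n k y (k - 1) := hae (k - 1) (by omega)
    have key : ∀ w < k, w ≠ 0 → (Pr n k x w ↔ Pr n k y w) := by
      intro w hw hw0
      exact pr_iff_of x y w (by rw [hae w (by omega)]) (by rw [hae (w + 1) (by omega)])
    have hle1 := altNum_le_alt x y 0 key
    have hle2 := altNum_le_alt y x 0 (fun w hw hwj => (key w hw hwj).symm)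
    unfold fval
    rw [hsign]
    split_ifs <;> (rw [abs_le]; constructor <;> push_cast <;> omega)
  · -- A2
    rcases hj with ⟨hxz, hynz⟩ | ⟨hyz, hxnz⟩
    · exact fval_lip_A2 hk x y j hxz hynz hag
    · rw [abs_sub_comm]
      exact fval_lip_A2 hk y x j hyz hxnz (fun i hi => (hag i hi).symm)
  · -- A3
    have hiff : ∀ i, extVal n k x i = 0 ↔ extVal n k y i = 0 := by
      intro i
      rcases Nat.lt_trichotomy i m.val with hlt | heq | hgt
      · have hik : i < k := lt_trans hlt m.isLt
        rw [extVal_lt x hik, extVal_lt y hik]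
        have := hpre ⟨i, hik⟩ hlt
        simp [this.1, this.2]
      · subst heq
        have hik : (m : ℕ) < k := m.isLt
        rw [extVal_lt x hik, extVal_lt y hik]
        constructor
        · intro h; exact absurd h hmx
        · intro h; exact absurd h hmy
      · by_cases h : i < k
        · rw [extVal_lt x h, extVal_lt y h, hs ⟨i, h⟩ hgt]
        · rw [extVal_ge x (by omega), extVal_ge y (by omega)]
    have halt : altNum n k x = altNum n k y := altNum_congr x y hiff
    have hfeq : fval n k x = fval n k y := by
      unfold fval
      rw [halt]
      by_cases h : extVal n k y (k - 1) = 0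
      · rw [if_pos ((hiff _).mpr h), if_pos h]
      · rw [if_neg (fun hc => h ((hiff _).mp hc)), if_neg h]
    rw [hfeq]
    simp

lemma walk_fval (hk : 2 ≤ k) {x y : ∀ i : Fin k, Fin (n i)}
    (p : (hierGraph n k).Walk x y) :
    |fval n k x - fval n k y| ≤ (p.length : ℤ) := by
  induction p with
  | nil => simp
  | @cons u v w h q ih =>
    have h1 : |fval n k u - fval n k w| ≤ |fval n k u - fval n k v| + |fval n k v - fval n k w| :=
      abs_sub_le _ _ _
    have h2 := fval_lip hk h
    rw [SimpleGraph.Walk.length_cons]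
    push_cast
    omega


/-- If `x_k ≠ y_k` and `x_k = 0` or `y_k = 0`, then `dist(x,y) = alt(x) + alt(y)`. -/
theorem stmt_5 (n : ℕ → ℕ) (k : ℕ) (hk : 2 ≤ k) (hn : ∀ i < k, 2 ≤ n i)
    (x y : ∀ i : Fin k, Fin (n i))
    (hne : x ⟨k - 1, by omega⟩ ≠ y ⟨k - 1, by omega⟩)
    (h0 : (x ⟨k - 1, by omega⟩).val = 0 ∨ (y ⟨k - 1, by omega⟩).val = 0) :
    (hierGraph n k).dist x y = altNum n k x + altNum n k y := by
  have hk1 : k - 1 < k := by omega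
  obtain ⟨px, hpx⟩ := walk_to_zero hn x
  obtain ⟨py, hpy⟩ := walk_to_zero hn y
  have hupper : (hierGraph n k).dist x y ≤ altNum n k x + altNum n k y := by
    have hd := SimpleGraph.dist_le (px.append py.reverse)
    rw [SimpleGraph.Walk.length_append, SimpleGraph.Walk.length_reverse] at hd
    omega
  have hreach : (hierGraph n k).Reachable x y := px.reachable.trans py.reachable.symm
  obtain ⟨p, hp⟩ := hreach.exists_walk_length_eq_dist
  have hw := walk_fval hk p
  rw [hp] at hw
  have hxval : extVal n k x (k - 1) = (x ⟨k - 1, hk1⟩).val := extVal_lt x hk1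
  have hyval : extVal n k y (k - 1) = (y ⟨k - 1, hk1⟩).val := extVal_lt y hk1
  have hlower : altNum n k x + altNum n k y ≤ (hierGraph n k).dist x y := by
    rcases h0 with h0 | h0
    · have hy0 : (y ⟨k - 1, hk1⟩).val ≠ 0 := by
        intro hy
        exact hne (Fin.ext (by rw [h0, hy]))
      have hfx : fval n k x = -(altNum n k x : ℤ) := by
        unfold fval
        rw [if_pos (by rw [hxval]; exact h0)]
      have hfy : fval n k y = (altNum n k y : ℤ) := by
        unfold fval
        rw [if_neg (by rw [hyval]; exact hy0)]
      rw [hfx, hfy, abs_le] at hw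
      omega
    · have hx0 : (x ⟨k - 1, hk1⟩).val ≠ 0 := by
        intro hx
        exact hne (Fin.ext (by rw [hx, h0]))
      have hfx : fval n k x = (altNum n k x : ℤ) := by
        unfold fval
        rw [if_neg (by rw [hxval]; exact hx0)]
      have hfy : fval n k y = -(altNum n k y : ℤ) := by
        unfold fval
        rw [if_pos (by rw [hyval]; exact h0)]
      rw [hfx, hfy, abs_le] at hw
      omega
  omega
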